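/- (Redundancy of order conditions under weak stage order.) Let (A, b) be an s-stage RK scheme with c = A e having weak stage order at least q, i.e., b^T A^j τ^(k) = 0 for all j ≥ 0 and 1 ≤ k ≤ q. Then for every ℓ ≥ 1 and every 1 ≤ k ≤ min(ℓ, q), the order condition residuals φ_{ℓ,k} := b^T A^{ℓ−k} c^k − k!/(ℓ+1)! satisfy φ_{ℓ,k} = k · φ_{ℓ,k−1}, and hence φ_{ℓ,k} = k! · φ_{ℓ,0}. In particular, for a method of weak stage order q, all the conditions φ_{ℓ,k} = 0 with 0 ≤ k ≤ min(ℓ, q) are mutually equivalent. -/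

import Mathlib

open Matrix

/-- Redundancy of order conditions under weak stage order: if `bᵀ Aʲ τ⁽ᵏ⁾ = 0` for all
`j ≥ 0` and `1 ≤ k ≤ q`, then for every `ℓ ≥ 1` and `1 ≤ k ≤ min(ℓ,q)` the order
condition residuals satisfy `φ_{ℓ,k} = k · φ_{ℓ,k−1}`, hence `φ_{ℓ,k} = k! · φ_{ℓ,0}`;
all conditions `φ_{ℓ,k} = 0`, `0 ≤ k ≤ min(ℓ,q)`, are mutually equivalent. -/
theorem stmt12 {s : ℕ} (A : Matrix (Fin s) (Fin s) ℝ) (b : Fin s → ℝ)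
    (c : Fin s → ℝ) (hc : c = A.mulVec fun _ => 1)
    (q : ℕ) (hq : 1 ≤ q)
    (τ : ℕ → Fin s → ℝ)
    (hτ : ∀ k, τ k = A.mulVec (fun i => c i ^ (k - 1)) - (k : ℝ)⁻¹ • fun i => c i ^ k)
    (φ : ℕ → ℕ → ℝ)
    (hφ : ∀ ℓ k, φ ℓ k =
      b ⬝ᵥ (A ^ (ℓ - k)).mulVec (fun i => c i ^ k) -
        (Nat.factorial k : ℝ) / (Nat.factorial (ℓ + 1) : ℝ))
    (hwso : ∀ j : ℕ, ∀ k, 1 ≤ k → k ≤ q → b ⬝ᵥ (A ^ j).mulVec (τ k) = 0) :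
    ∀ ℓ, 1 ≤ ℓ → ∀ k, 1 ≤ k → k ≤ min ℓ q →
      φ ℓ k = (k : ℝ) * φ ℓ (k - 1) ∧ φ ℓ k = (Nat.factorial k : ℝ) * φ ℓ 0 ∧
        (φ ℓ k = 0 ↔ φ ℓ 0 = 0) := by
  have step : ∀ ℓ k, 1 ≤ ℓ → 1 ≤ k → k ≤ ℓ → k ≤ q →
      φ ℓ k = (k : ℝ) * φ ℓ (k - 1) := by
    intro ℓ k hℓ hk hkℓ hkq
    have hj := hwso (ℓ - k) k hk hkq
    rw [hτ k] at hj
    rw [Matrix.mulVec_sub, Matrix.mulVec_smul, dotProduct_sub, dotProduct_smul,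
      Matrix.mulVec_mulVec, ← pow_succ, sub_eq_zero] at hj
    have hk0 : (k : ℝ) ≠ 0 := by positivity
    have key : b ⬝ᵥ (A ^ (ℓ - k)).mulVec (fun i => c i ^ k)
        = (k : ℝ) * (b ⬝ᵥ (A ^ (ℓ - k + 1)).mulVec (fun i => c i ^ (k - 1))) := by
      field_simp at hj
      rw [hj]; simp [smul_eq_mul, hk0]
    have hsub : ℓ - (k - 1) = ℓ - k + 1 := by omega
    have hfac : (Nat.factorial k : ℝ) = (k : ℝ) * (Nat.factorial (k - 1) : ℝ) := by
      exact_mod_cast (Nat.mul_factorial_pred (by omega : k ≠ 0)).symm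
    rw [hφ, hφ, key, hsub, hfac]
    ring
  have fact : ∀ ℓ, 1 ≤ ℓ → ∀ k, k ≤ ℓ → k ≤ q →
      φ ℓ k = (Nat.factorial k : ℝ) * φ ℓ 0 := by
    intro ℓ hℓ k
    induction k with
    | zero => simp
    | succ n ih =>
      intro h1 h2
      have := step ℓ (n + 1) hℓ (by omega) h1 h2
      simp only [Nat.add_sub_cancel] at this
      rw [this, ih (by omega) (by omega), Nat.factorial_succ]
      push_cast
      ring
  intro ℓ hℓ k hk hkm
  have hkℓ : k ≤ ℓ := le_trans hkm (min_le_left _ _)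
  have hkq : k ≤ q := le_trans hkm (min_le_right _ _)
  refine ⟨step ℓ k hℓ hk hkℓ hkq, fact ℓ hℓ k hkℓ hkq, ?_⟩
  rw [fact ℓ hℓ k hkℓ hkq]
  have : (Nat.factorial k : ℝ) ≠ 0 := by positivity
  constructor
  · intro h
    rcases mul_eq_zero.mp h with h | h
    · exact absurd h this
    · exact h
  · intro h; rw [h, mul_zero]
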